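/- Let ρ be a density matrix on H ⊗ H. If the SWAP test on ρ accepts with probability 1, i.e., Tr(((I+S)/2) ρ) = 1, then the two reduced states of ρ are equal: Tr_2(ρ) = Tr_1(ρ). -/

import Mathlib

open Finset
open scoped Matrix
open scoped ComplexOrder

noncomputable section

/-- The swap matrix on `H ⊗ H`. -/
def swapMatrix (ι : Type*) [Fintype ι] [DecidableEq ι] : Matrix (ι × ι) (ι × ι) ℂ :=
  Matrix.of fun p q => if p.1 = q.2 ∧ p.2 = q.1 then 1 else 0

/-- Partial trace over the first tensor factor. -/
def ptraceFst {ι κ : Type*} [Fintype ι] (M : Matrix (ι × κ) (ι × κ) ℂ) : Matrix κ κ ℂ :=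
  Matrix.of fun j j' => ∑ i, M (i, j) (i, j')

/-- Partial trace over the second tensor factor. -/
def ptraceSnd {ι κ : Type*} [Fintype κ] (M : Matrix (ι × κ) (ι × κ) ℂ) : Matrix ι ι ℂ :=
  Matrix.of fun i i' => ∑ j, M (i, j) (i', j)

/-- The outer product `|ψ⟩⟨φ|`. -/
def outer {n : Type*} (ψ φ : n → ℂ) : Matrix n n ℂ :=
  Matrix.of fun p q => ψ p * star (φ q)

/-- The trace norm `‖A‖_tr = Tr √(AᴴA)`. -/
def traceNorm {n : Type*} [Fintype n] [DecidableEq n] (A : Matrix n n ℂ) : ℝ :=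
  (((Matrix.posSemidef_conjTranspose_mul_self A).1.eigenvectorUnitary.1 *
      Matrix.diagonal (((↑) : ℝ → ℂ) ∘ Real.sqrt ∘ (Matrix.posSemidef_conjTranspose_mul_self A).1.eigenvalues) *
      (star (Matrix.posSemidef_conjTranspose_mul_self A).1.eigenvectorUnitary : Matrix n n ℂ)).trace).re

/-- The trace distance between two states. -/
def traceDist {n : Type*} [Fintype n] [DecidableEq n] (ρ σ : Matrix n n ℂ) : ℝ :=
  (1 / 2) * traceNorm (ρ - σ)

open scoped MatrixOrder

section Aux

variable {ι : Type*} [Fintype ι] [DecidableEq ι]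

lemma swap_mul_apply (M : Matrix (ι × ι) (ι × ι) ℂ) (p q : ι × ι) :
    (swapMatrix ι * M) p q = M (p.2, p.1) q := by
  have key : ∀ r : ι × ι, (p.1 = r.2 ∧ p.2 = r.1) ↔ (p.2, p.1) = r := by
    intro r; rw [Prod.ext_iff]
    exact ⟨fun h => ⟨h.2, h.1⟩, fun h => ⟨h.2, h.1⟩⟩
  simp only [Matrix.mul_apply, swapMatrix, Matrix.of_apply]
  simp_rw [key]
  simp

lemma mul_swap_apply (M : Matrix (ι × ι) (ι × ι) ℂ) (p q : ι × ι) :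
    (M * swapMatrix ι) p q = M p (q.2, q.1) := by
  have key : ∀ r : ι × ι, (r.1 = q.2 ∧ r.2 = q.1) ↔ r = (q.2, q.1) := by
    intro r; rw [Prod.ext_iff]
  simp only [Matrix.mul_apply, swapMatrix, Matrix.of_apply]
  simp_rw [key]
  simp

lemma swap_conjTranspose : (swapMatrix ι)ᴴ = swapMatrix ι := by
  ext p q
  simp only [Matrix.conjTranspose_apply, swapMatrix, Matrix.of_apply, apply_ite star,
    star_one, star_zero]
  refine if_congr ?_ rfl rfl
  exact ⟨fun h => ⟨h.2.symm, h.1.symm⟩, fun h => ⟨h.2.symm, h.1.symm⟩⟩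

lemma swap_mul_swap : swapMatrix ι * swapMatrix ι = 1 := by
  ext p q
  rw [swap_mul_apply]
  simp only [swapMatrix, Matrix.of_apply, Matrix.one_apply]
  refine if_congr ?_ rfl rfl
  rw [Prod.ext_iff]
  exact ⟨fun h => ⟨h.2, h.1⟩, fun h => ⟨h.2, h.1⟩⟩

lemma posSemidef_trace_zero {n : Type*} [Fintype n] [DecidableEq n]
    {M : Matrix n n ℂ} (hM : M.PosSemidef) (h : M.trace = 0) : M = 0 := by
  exact hM.trace_eq_zero_iff.mp h

end Aux

/-- If the SWAP test on a density matrix `ρ` accepts with probability 1,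
then the two reduced states of `ρ` are equal. -/
theorem stmt_7 {ι : Type*} [Fintype ι] [DecidableEq ι] (ρ : Matrix (ι × ι) (ι × ι) ℂ)
    (hρ : ρ.PosSemidef) (htr : ρ.trace = 1)
    (hacc : (((2 : ℂ)⁻¹ • (1 + swapMatrix ι)) * ρ).trace = 1) :
    ptraceSnd ρ = ptraceFst ρ := by
  have h1 : (swapMatrix ι * ρ).trace = 1 := by
    rw [Matrix.smul_mul, Matrix.trace_smul, Matrix.add_mul, Matrix.trace_add, Matrix.one_mul,
      htr, smul_eq_mul] at hacc
    field_simp at hacc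
    linear_combination hacc
  set P := ((2 : ℂ)⁻¹ • (1 - swapMatrix ι) : Matrix (ι × ι) (ι × ι) ℂ) with hPdef
  have hPH : Pᴴ = P := by
    rw [hPdef, Matrix.conjTranspose_smul, Matrix.conjTranspose_sub, Matrix.conjTranspose_one,
      swap_conjTranspose]
    norm_num
  have hsq : (1 - swapMatrix ι) * (1 - swapMatrix ι) = (2 : ℂ) • (1 - swapMatrix ι) := by
    rw [Matrix.sub_mul, Matrix.one_mul, Matrix.mul_sub, Matrix.mul_one, swap_mul_swap]
    module
  have hPP : P * P = P := by
    rw [hPdef, Matrix.smul_mul, Matrix.mul_smul, hsq, smul_smul, smul_smul]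
    norm_num
  have htrP : (P * ρ).trace = 0 := by
    rw [hPdef, Matrix.smul_mul, Matrix.trace_smul, Matrix.sub_mul, Matrix.trace_sub,
      Matrix.one_mul, htr, h1]
    simp
  have hPSD : (P * ρ * P).PosSemidef := by
    have := hρ.mul_mul_conjTranspose_same P
    rwa [hPH] at this
  have hPρP : P * ρ * P = 0 := by
    apply posSemidef_trace_zero hPSD
    rw [Matrix.trace_mul_comm, ← Matrix.mul_assoc, hPP, htrP]
  have hAP : CFC.sqrt ρ * P = 0 := by
    rw [← Matrix.conjTranspose_mul_self_eq_zero, Matrix.conjTranspose_mul, hPH,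
      (Matrix.nonneg_iff_posSemidef.mp (CFC.sqrt_nonneg ρ)).1, Matrix.mul_assoc, ← Matrix.mul_assoc (CFC.sqrt ρ),
      CFC.sqrt_mul_sqrt_self ρ hρ.nonneg,
      ← Matrix.mul_assoc]
    exact hPρP
  have hρP : ρ * P = 0 := by
    rw [← CFC.sqrt_mul_sqrt_self ρ hρ.nonneg, Matrix.mul_assoc, hAP, Matrix.mul_zero]
  have hPρ : P * ρ = 0 := by
    have := congrArg Matrix.conjTranspose hρP
    rwa [Matrix.conjTranspose_mul, hPH, hρ.isHermitian.eq, Matrix.conjTranspose_zero] at this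
  have h2ne : (2 : ℂ)⁻¹ ≠ 0 := by norm_num
  have hSρ : swapMatrix ι * ρ = ρ := by
    rw [hPdef, Matrix.smul_mul] at hPρ
    have h0 := (smul_eq_zero.mp hPρ).resolve_left h2ne
    rw [Matrix.sub_mul, Matrix.one_mul, sub_eq_zero] at h0
    exact h0.symm
  have hρS : ρ * swapMatrix ι = ρ := by
    rw [hPdef, Matrix.mul_smul] at hρP
    have h0 := (smul_eq_zero.mp hρP).resolve_left h2ne
    rw [Matrix.mul_sub, Matrix.mul_one, sub_eq_zero] at h0
    exact h0.symm
  ext i i'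
  simp only [ptraceSnd, ptraceFst, Matrix.of_apply]
  refine Finset.sum_congr rfl fun j _ => ?_
  have e1 : ρ (i, j) (i', j) = ρ (j, i) (i', j) := by
    conv_lhs => rw [← hSρ, swap_mul_apply]
  have e2 : ρ (j, i) (i', j) = ρ (j, i) (j, i') := by
    conv_lhs => rw [← hρS, mul_swap_apply]
  rw [e1, e2]

end
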